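/- Let w : [1/2, 1) → ℝ be C¹ with locally Lipschitz derivative, w(1/2) = 0, w'(1/2) = 0, and suppose that for almost every t ∈ (1/2, 1) the second derivative satisfies w''(t) + (2(2t−1)/(t(1−t)))·w'(t) − (6/(t(1−t)))·w(t) ≤ 0. Then w(t) ≤ 0 for all t ∈ [1/2, 1). -/

import Mathlib

open MeasureTheory Set

open ENNReal


/-- A globally Lipschitz real function whose derivative (wherever it exists) is
nonpositive a.e. on `(a, b)` satisfies `f b ≤ f a`. -/
lemma lip_key {f : ℝ → ℝ} {L : NNReal} {a b : ℝ} (hab : a ≤ b)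
    (hf : LipschitzWith L f)
    (hd : ∀ᵐ x ∂volume, x ∈ Ioo a b → ∀ r : ℝ, HasDerivAt f r x → r ≤ 0) :
    f b ≤ f a := by
  set h : ℝ → ℝ := fun t => (L : ℝ) * t - f t with hh
  have hmono : Monotone h := by
    intro x y hxy
    have h1 : |f x - f y| ≤ (L : ℝ) * (y - x) := by
      have := hf.dist_le_mul x y
      rwa [Real.dist_eq, Real.dist_eq, abs_sub_comm x y,
        abs_of_nonneg (by linarith : (0:ℝ) ≤ y - x)] at this
    have h2 := (abs_le.1 h1).1
    simp only [hh]
    linarith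
  have hcont : Continuous h := (continuous_const.mul continuous_id).sub hf.continuous
  set S : StieltjesFunction ℝ := ⟨h, hmono, fun x => hcont.continuousWithinAt⟩ with hS
  have hder := S.ae_hasDerivAt
  have hfin := Measure.rnDeriv_lt_top S.measure volume
  -- a.e. on Ioo a b, rnDeriv ≥ L
  have hge : ∀ᵐ x ∂volume, x ∈ Ioo a b → (L : ℝ≥0∞) ≤ S.measure.rnDeriv volume x := by
    filter_upwards [hder, hfin, hd] with x hx1 hx2 hx3 hmem
    have hfx : HasDerivAt f ((L : ℝ) - (S.measure.rnDeriv volume x).toReal) x := by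
      have : HasDerivAt (fun t => (L : ℝ) * t - h t)
          ((L : ℝ) - (S.measure.rnDeriv volume x).toReal) x := by
        have h2 := ((hasDerivAt_id x).const_mul (L : ℝ)).sub hx1
        simp at h2; exact h2
      convert this using 1
      funext t; simp [hh]
    have := hx3 hmem _ hfx
    have hL : (L : ℝ) ≤ (S.measure.rnDeriv volume x).toReal := by linarith
    rw [← ENNReal.ofReal_coe_nnreal]
    exact ENNReal.ofReal_le_of_le_toReal hL
  have step1 : (L : ℝ≥0∞) * ENNReal.ofReal (b - a) ≤ S.measure (Ioc a b) := by
    calc (L : ℝ≥0∞) * ENNReal.ofReal (b - a)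
        = ∫⁻ _ in Ioo a b, (L : ℝ≥0∞) ∂volume := by
          rw [setLIntegral_const, Real.volume_Ioo]
      _ ≤ ∫⁻ x in Ioo a b, S.measure.rnDeriv volume x ∂volume := by
          refine lintegral_mono_ae ?_
          rw [ae_restrict_iff' measurableSet_Ioo]
          filter_upwards [hge] with x hx hmem using hx hmem
      _ ≤ ∫⁻ x in Ioc a b, S.measure.rnDeriv volume x ∂volume :=
          lintegral_mono_set Ioo_subset_Ioc_self
      _ ≤ S.measure (Ioc a b) := Measure.setLIntegral_rnDeriv_le _
  rw [StieltjesFunction.measure_Ioc] at step1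
  have hSb : S b = h b := rfl
  have hSa : S a = h a := rfl
  rw [hSb, hSa] at step1
  have hnn : (L : ℝ≥0∞) * ENNReal.ofReal (b - a) = ENNReal.ofReal ((L : ℝ) * (b - a)) := by
    rw [ENNReal.ofReal_mul (by positivity), ENNReal.ofReal_coe_nnreal]
  rw [hnn] at step1
  have := (ENNReal.ofReal_le_ofReal_iff (sub_nonneg.2 (hmono hab))).1 step1
  simp only [hh] at this
  linarith

/-- Version of `lip_key` for a function Lipschitz only on `Icc a b`. -/
lemma lipOn_key {f : ℝ → ℝ} {L : NNReal} {a b : ℝ} (hab : a ≤ b)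
    (hf : LipschitzOnWith L f (Icc a b))
    (hd : ∀ᵐ x ∂volume, x ∈ Ioo a b → ∀ r : ℝ, HasDerivAt f r x → r ≤ 0) :
    f b ≤ f a := by
  set π : ℝ → ℝ := fun t => max a (min t b) with hπ
  have hπlip : LipschitzWith 1 π := by
    refine LipschitzWith.of_dist_le_mul fun x y => ?_
    rw [Real.dist_eq, Real.dist_eq, NNReal.coe_one, one_mul]
    calc |π x - π y| = |max (min x b) a - max (min y b) a| := by
          simp only [hπ, max_comm a]
      _ ≤ |min x b - min y b| := abs_max_sub_max_le_abs _ _ _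
      _ ≤ max |x - y| |b - b| := abs_min_sub_min_le_max _ _ _ _
      _ ≤ |x - y| := by simp
  have hmaps : Set.MapsTo π univ (Icc a b) := fun t _ =>
    ⟨le_max_left _ _, max_le hab (min_le_right _ _)⟩
  have hg : LipschitzWith L (f ∘ π) := by
    have := hf.comp (hπlip.lipschitzOnWith (s := univ)) hmaps
    rw [lipschitzOnWith_univ] at this
    simpa using this
  have hd' : ∀ᵐ x ∂volume, x ∈ Ioo a b → ∀ r : ℝ, HasDerivAt (f ∘ π) r x → r ≤ 0 := by
    filter_upwards [hd] with x hx hmem r hr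
    refine hx hmem r ?_
    have hev : f =ᶠ[nhds x] (f ∘ π) := by
      filter_upwards [Ioo_mem_nhds hmem.1 hmem.2] with y hy
      have : π y = y := by
        simp only [hπ]
        rw [min_eq_left hy.2.le, max_eq_right hy.1.le]
      simp [Function.comp, this]
    exact hr.congr_of_eventuallyEq hev
  have := lip_key hab hg hd'
  have hb : π b = b := by simp [hπ, hab]
  have ha : π a = a := by simp [hπ, hab]
  simpa [Function.comp, hb, ha] using this

lemma lip_of_deriv {f f' : ℝ → ℝ} {s : Set ℝ} (hconv : Convex ℝ s) (hcomp : IsCompact s)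
    (hd : ∀ x ∈ s, HasDerivWithinAt f (f' x) s x) (hc : ContinuousOn f' s) :
    ∃ K : NNReal, LipschitzOnWith K f s := by
  obtain ⟨C, hC⟩ := hcomp.exists_bound_of_continuousOn hc
  refine ⟨NNReal.mk (max C 0) (le_max_right _ _), hconv.lipschitzOnWith_of_nnnorm_hasDerivWithin_le hd ?_⟩
  intro x hx
  rw [← NNReal.coe_le_coe, coe_nnnorm, NNReal.coe_mk]
  exact le_trans (hC x hx) (le_max_left _ _)

lemma lip_mul {f g : ℝ → ℝ} {s : Set ℝ} (hcomp : IsCompact s)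
    (hf : ∃ K : NNReal, LipschitzOnWith K f s) (hg : ∃ K : NNReal, LipschitzOnWith K g s) :
    ∃ K : NNReal, LipschitzOnWith K (fun x => f x * g x) s := by
  obtain ⟨Kf, hKf⟩ := hf; obtain ⟨Kg, hKg⟩ := hg
  obtain ⟨Mf, hMf⟩ := hcomp.exists_bound_of_continuousOn hKf.continuousOn
  obtain ⟨Mg, hMg⟩ := hcomp.exists_bound_of_continuousOn hKg.continuousOn
  refine ⟨NNReal.mk (max (Mf * Kg + Mg * Kf) 0) (le_max_right _ _), ?_⟩
  rw [lipschitzOnWith_iff_dist_le_mul]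
  intro x hx y hy
  rw [Real.dist_eq, Real.dist_eq, NNReal.coe_mk]
  have h1 := (lipschitzOnWith_iff_dist_le_mul.1 hKf) x hx y hy
  have h2 := (lipschitzOnWith_iff_dist_le_mul.1 hKg) x hx y hy
  rw [Real.dist_eq, Real.dist_eq] at h1 h2
  have hf1 : |f x| ≤ Mf := by rw [← Real.norm_eq_abs]; exact hMf x hx
  have hg1 : |g y| ≤ Mg := by rw [← Real.norm_eq_abs]; exact hMg y hy
  have key : |f x * g x - f y * g y| ≤ (Mf * Kg + Mg * Kf) * |x - y| := by
    have e : f x * g x - f y * g y = f x * (g x - g y) + g y * (f x - f y) := by ring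
    rw [e]
    calc |f x * (g x - g y) + g y * (f x - f y)|
        ≤ |f x * (g x - g y)| + |g y * (f x - f y)| := abs_add_le _ _
      _ = |f x| * |g x - g y| + |g y| * |f x - f y| := by rw [abs_mul, abs_mul]
      _ ≤ Mf * ((Kg:ℝ) * |x - y|) + Mg * ((Kf:ℝ) * |x - y|) := by
          have hMf0 : 0 ≤ Mf := le_trans (abs_nonneg _) hf1
          have hMg0 : 0 ≤ Mg := le_trans (abs_nonneg _) hg1
          have e1 := mul_le_mul hf1 h2 (abs_nonneg _) hMf0
          have e2 := mul_le_mul hg1 h1 (abs_nonneg _) hMg0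
          linarith
      _ = (Mf * Kg + Mg * Kf) * |x - y| := by ring
  exact le_trans key (mul_le_mul_of_nonneg_right (le_max_left _ _) (abs_nonneg _))



noncomputable def Ufun (t : ℝ) : ℝ := t^2 - t + 1/3
noncomputable def Vfun (w w' : ℝ → ℝ) (t : ℝ) : ℝ := Ufun t * w' t - (2*t - 1) * w t
noncomputable def Gfun (w w' : ℝ → ℝ) (t : ℝ) : ℝ := Vfun w w' t * ((t*(1-t))^2)⁻¹

lemma Ufun_pos (t : ℝ) : 0 < Ufun t := by unfold Ufun; nlinarith [sq_nonneg (t - 1/2)]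

lemma Ufun_cont : Continuous Ufun := by unfold Ufun; fun_prop

lemma Ufun_hasDerivAt (x : ℝ) : HasDerivAt Ufun (2*x - 1) x := by
  have h := ((hasDerivAt_pow 2 x).sub (hasDerivAt_id x)).add_const (1/3 : ℝ)
  refine h.congr_deriv ?_
  push_cast; ring

lemma qfun_hasDerivAt (x : ℝ) :
    HasDerivAt (fun t : ℝ => (t*(1-t))^2) (2*(x*(1-x))*(1-2*x)) x := by
  have h1 : HasDerivAt (fun t : ℝ => t*(1-t)) (1-2*x) x := by
    have := (hasDerivAt_id x).mul ((hasDerivAt_const x (1:ℝ)).sub (hasDerivAt_id x))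
    refine this.congr_deriv ?_; simp; ring
  have := h1.pow 2
  refine this.congr_deriv ?_; push_cast; ring

lemma I1 (x u v r Ux Vx z : ℝ) (hx : x ≠ 0) (h1x : (1:ℝ)-x ≠ 0) (hU : Ux ≠ 0)
    (hz : z = ((r*(x*(1-x))^2 + Vx*((x*(1-x))^2)⁻¹*(2*(x*(1-x))*(1-2*x)) + (2*u + (2*x-1)*v))*Ux
        - (Vx + (2*x-1)*u)*(2*x-1)) / Ux^2) :
    (z + 2*(2*x-1)/(x*(1-x))*v - 6/(x*(1-x))*u) * ((x*(1-x))*Ux^2)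
     = r*(x*(1-x))^3*Ux + (2*(1-2*x)*Vx*Ux + (2*u+(2*x-1)*v)*Ux*(x*(1-x))
       - (Vx+(2*x-1)*u)*(2*x-1)*(x*(1-x)) + (2*(2*x-1)*v-6*u)*Ux^2) := by
  subst hz
  field_simp
  ring

lemma I2 (x u v : ℝ) :
    2*(1-2*x)*((x^2-x+1/3)*v - (2*x-1)*u)*(x^2-x+1/3)
      + (2*u+(2*x-1)*v)*(x^2-x+1/3)*(x*(1-x))
      - (((x^2-x+1/3)*v - (2*x-1)*u)+(2*x-1)*u)*(2*x-1)*(x*(1-x))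
      + (2*(2*x-1)*v-6*u)*(x^2-x+1/3)^2 = 0 := by ring




set_option maxHeartbeats 1000000 in
/-- ODE comparison principle: if `w` is `C¹` on `[1/2, 1)` with locally Lipschitz
derivative `w'`, `w(1/2) = 0`, `w'(1/2) = 0`, and a.e.
`w'' + (2(2t-1)/(t(1-t)))·w' - (6/(t(1-t)))·w ≤ 0`, then `w ≤ 0` on `[1/2, 1)`. -/
theorem stmt2 (w w' : ℝ → ℝ)
    (hderivw : ∀ t ∈ Ico (1/2 : ℝ) 1, HasDerivWithinAt w (w' t) (Ico (1/2 : ℝ) 1) t)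
    (hlip : ∀ a b : ℝ, 1/2 ≤ a → b < 1 → ∃ L : NNReal, LipschitzOnWith L w' (Icc a b))
    (hw0 : w (1/2) = 0) (hw'0 : w' (1/2) = 0)
    (hineq : ∀ᵐ t ∂volume, t ∈ Ioo (1/2 : ℝ) 1 →
      deriv w' t + (2*(2*t-1)/(t*(1-t))) * w' t - (6/(t*(1-t))) * w t ≤ 0) :
    ∀ t ∈ Ico (1/2 : ℝ) 1, w t ≤ 0 := by
  intro t0 ht0
  rcases eq_or_lt_of_le ht0.1 with heq | hlt
  · rw [← heq, hw0]
  have ht01 : t0 < 1 := ht0.2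
  set G : ℝ → ℝ := Gfun w w' with hGdef
  set s : Set ℝ := Icc (1/2 : ℝ) t0 with hs
  have hsub : s ⊆ Ico (1/2:ℝ) 1 := fun x hx => ⟨hx.1, lt_of_le_of_lt hx.2 ht01⟩
  have hconv : Convex ℝ s := convex_Icc _ _
  have hcomp : IsCompact s := isCompact_Icc
  have hxmem : ∀ x ∈ s, (0:ℝ) < x ∧ (0:ℝ) < 1 - x := by
    intro x hx
    simp only [hs, mem_Icc] at hx
    constructor <;> [linarith [hx.1]; linarith [hx.2, ht01]]
  -- continuity
  obtain ⟨K1, hK1⟩ := hlip (1/2) t0 le_rfl ht01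
  have hcontw' : ContinuousOn w' s := hK1.continuousOn
  have hcontw : ContinuousOn w s :=
    fun x hx => ((hderivw x (hsub hx)).continuousWithinAt).mono hsub
  -- Lipschitz building blocks
  have hlipw : ∃ K : NNReal, LipschitzOnWith K w s :=
    lip_of_deriv hconv hcomp (fun x hx => ((hderivw x (hsub hx)).mono hsub)) hcontw'
  have hlipw' : ∃ K : NNReal, LipschitzOnWith K w' s := ⟨K1, hK1⟩
  have hlipU : ∃ K : NNReal, LipschitzOnWith K Ufun s :=
    lip_of_deriv (f' := fun t => 2*t - 1) hconv hcomp
      (fun x _ => (Ufun_hasDerivAt x).hasDerivWithinAt) (by fun_prop)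
  have hlipc : ∃ K : NNReal, LipschitzOnWith K (fun t : ℝ => 2*t - 1) s :=
    lip_of_deriv (f' := fun _ => 2) hconv hcomp
      (fun x _ => by
        simpa using (((hasDerivAt_id x).const_mul (2:ℝ)).sub_const 1).hasDerivWithinAt)
      (by fun_prop)
  have hlipV : ∃ K : NNReal, LipschitzOnWith K (Vfun w w') s := by
    obtain ⟨Ka, ha⟩ := lip_mul hcomp hlipU hlipw'
    obtain ⟨Kb, hb⟩ := lip_mul hcomp hlipc hlipw
    exact ⟨Ka + Kb, ha.sub hb⟩
  have hlipψ : ∃ K : NNReal, LipschitzOnWith K (fun t : ℝ => ((t*(1-t))^2)⁻¹) s := by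
    refine lip_of_deriv (f' := fun t => -(2*(t*(1-t))*(1-2*t)) / (((t*(1-t))^2)^2))
      hconv hcomp (fun x hx => ?_) ?_
    · obtain ⟨h0, h1⟩ := hxmem x hx
      have hne : ((x*(1-x))^2) ≠ 0 := by positivity
      exact ((qfun_hasDerivAt x).inv hne).hasDerivWithinAt
    · refine ContinuousOn.div (by fun_prop) (by fun_prop) (fun x hx => ?_)
      obtain ⟨h0, h1⟩ := hxmem x hx
      positivity
  obtain ⟨KG, hKG⟩ : ∃ K : NNReal, LipschitzOnWith K G s := lip_mul hcomp hlipV hlipψ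
  -- G(1/2) = 0
  have hG0 : G (1/2) = 0 := by
    simp only [hGdef, Gfun, Vfun]
    rw [hw'0, hw0]
    ring
  -- the a.e. derivative bound for G
  have hdG : ∀ᵐ x ∂volume, x ∈ Ioo (1/2:ℝ) t0 → ∀ r : ℝ, HasDerivAt G r x → r ≤ 0 := by
    filter_upwards [hineq] with x hx hmem r hr
    have hx12 : (1/2:ℝ) < x := hmem.1
    have hxlt1 : x < 1 := lt_trans hmem.2 ht01
    have hineqx := hx ⟨hx12, hxlt1⟩
    have hx0 : (0:ℝ) < x := by linarith
    have h1x : (0:ℝ) < 1 - x := by linarith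
    have hq2 : ((x*(1-x))^2) ≠ 0 := by positivity
    have hUne : Ufun x ≠ 0 := ne_of_gt (Ufun_pos x)
    have hwd : HasDerivAt w (w' x) x :=
      (hderivw x ⟨le_of_lt hx12, hxlt1⟩).hasDerivAt (Ico_mem_nhds hx12 hxlt1)
    set Vd : ℝ := r * (x*(1-x))^2 + G x * (2*(x*(1-x))*(1-2*x)) with hVddef
    have hVd : HasDerivAt (Vfun w w') Vd x := by
      have h1 : HasDerivAt (fun t => G t * (t*(1-t))^2) Vd x := hr.mul (qfun_hasDerivAt x)
      refine h1.congr_of_eventuallyEq ?_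
      filter_upwards [Ioo_mem_nhds hx0 hxlt1] with y hy
      have hy1 : (0:ℝ) < y := hy.1
      have hy2 : (0:ℝ) < 1 - y := by linarith [hy.2]
      have hyne : ((y*(1-y))^2) ≠ 0 := by positivity
      simp only [hGdef, Gfun]
      rw [mul_assoc, inv_mul_cancel₀ hyne, mul_one]
    have hw'eq : ∀ t, w' t = (Vfun w w' t + (2*t-1) * w t) / Ufun t := by
      intro t
      have h := (Ufun_pos t).ne'
      field_simp [Vfun]
      simp only [Vfun]; ring
    set Z : ℝ := ((Vd + (2 * w x + (2*x-1) * w' x)) * Ufun x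
        - (Vfun w w' x + (2*x-1) * w x) * (2*x-1)) / (Ufun x)^2 with hZdef
    have hw'd : HasDerivAt w' Z x := by
      have hc : HasDerivAt (fun t : ℝ => 2*t - 1) 2 x := by
        simpa using (((hasDerivAt_id x).const_mul (2:ℝ)).sub_const 1)
      have hnum : HasDerivAt (fun t => Vfun w w' t + (2*t-1) * w t)
          (Vd + (2 * w x + (2*x-1) * w' x)) x := hVd.add (hc.mul hwd)
      have hdiv := hnum.div (Ufun_hasDerivAt x) hUne
      exact hdiv.congr_of_eventuallyEq
        (Filter.Eventually.of_forall fun t => hw'eq t)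
    have hz : deriv w' x = Z := hw'd.deriv
    rw [hz] at hineqx
    -- algebraic endgame
    have hzI : Z = ((r*(x*(1-x))^2
        + (Vfun w w' x)*((x*(1-x))^2)⁻¹*(2*(x*(1-x))*(1-2*x))
        + (2 * (w x) + (2*x-1)*(w' x)))*(Ufun x)
        - ((Vfun w w' x) + (2*x-1)*(w x))*(2*x-1)) / (Ufun x)^2 := by
      rw [hZdef, hVddef]
      simp only [hGdef, Gfun]
    have hEmul : (0:ℝ) ≤ (x*(1-x))*(Ufun x)^2 :=
      le_of_lt (mul_pos (by positivity) (pow_pos (Ufun_pos x) 2))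
    have hE0 : (Z + 2*(2*x-1)/(x*(1-x)) * w' x - 6/(x*(1-x)) * w x) * ((x*(1-x))*(Ufun x)^2)
        ≤ 0 := mul_nonpos_of_nonpos_of_nonneg hineqx hEmul
    rw [I1 x (w x) (w' x) r (Ufun x) (Vfun w w' x) Z hx0.ne' h1x.ne' hUne hzI] at hE0
    have hREST : 2*(1-2*x)*(Vfun w w' x)*(Ufun x)
        + (2*(w x)+(2*x-1)*(w' x))*(Ufun x)*(x*(1-x))
        - ((Vfun w w' x)+(2*x-1)*(w x))*(2*x-1)*(x*(1-x))
        + (2*(2*x-1)*(w' x)-6*(w x))*(Ufun x)^2 = 0 := by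
      simp only [Vfun, Ufun]
      exact I2 x (w x) (w' x)
    have hfin : r*(x*(1-x))^3*(Ufun x) ≤ 0 := by linarith
    nlinarith [mul_pos (pow_pos (mul_pos hx0 h1x) 3) (Ufun_pos x), hfin]
  -- Step A : V ≤ 0 on s
  have hVle : ∀ x ∈ s, Vfun w w' x ≤ 0 := by
    intro x hx
    obtain ⟨h0, h1⟩ := hxmem x hx
    have hGle : G x ≤ 0 := by
      rcases eq_or_lt_of_le hx.1 with h12 | h12
      · rw [← h12]; exact le_of_eq hG0
      · have hmono := hKG.mono (Icc_subset_Icc le_rfl hx.2)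
        have hae : ∀ᵐ y ∂volume, y ∈ Ioo (1/2:ℝ) x → ∀ r : ℝ, HasDerivAt G r y → r ≤ 0 := by
          filter_upwards [hdG] with y hy hmem
          exact hy ⟨hmem.1, lt_of_lt_of_le hmem.2 hx.2⟩
        have := lipOn_key (le_of_lt h12) hmono hae
        rwa [hG0] at this
    have hne : ((x*(1-x))^2) ≠ 0 := by positivity
    have hVeq : Vfun w w' x = G x * (x*(1-x))^2 := by
      simp only [hGdef, Gfun]
      rw [mul_assoc, inv_mul_cancel₀ hne, mul_one]
    rw [hVeq]
    exact mul_nonpos_of_nonpos_of_nonneg hGle (by positivity)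
  -- Step B : w/U is antitone on s
  have hantH : AntitoneOn (fun t => w t / Ufun t) s := by
    apply antitoneOn_of_deriv_nonpos hconv
    · exact hcontw.div (Ufun_cont.continuousOn) (fun x _ => (Ufun_pos x).ne')
    · rw [hs, interior_Icc]
      intro x hx
      have hwd : HasDerivAt w (w' x) x :=
        (hderivw x ⟨le_of_lt hx.1, lt_trans hx.2 ht01⟩).hasDerivAt
          (Ico_mem_nhds hx.1 (lt_trans hx.2 ht01))
      exact (hwd.div (Ufun_hasDerivAt x) (Ufun_pos x).ne').differentiableAt.differentiableWithinAt
    · rw [hs, interior_Icc]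
      intro x hx
      have hwd : HasDerivAt w (w' x) x :=
        (hderivw x ⟨le_of_lt hx.1, lt_trans hx.2 ht01⟩).hasDerivAt
          (Ico_mem_nhds hx.1 (lt_trans hx.2 ht01))
      have hd := hwd.div (Ufun_hasDerivAt x) (Ufun_pos x).ne'
      rw [(show HasDerivAt (fun t => w t / Ufun t) _ x from hd).deriv]
      apply div_nonpos_of_nonpos_of_nonneg _ (by positivity)
      have := hVle x ⟨le_of_lt hx.1, le_of_lt hx.2⟩
      simp only [Vfun] at this
      linarith
  have h12s : (1/2:ℝ) ∈ s := ⟨le_rfl, le_of_lt hlt⟩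
  have ht0s : t0 ∈ s := ⟨le_of_lt hlt, le_rfl⟩
  have hHle : w t0 / Ufun t0 ≤ w (1/2) / Ufun (1/2) := hantH h12s ht0s (le_of_lt hlt)
  have hH0 : w (1/2) / Ufun (1/2) = 0 := by rw [hw0]; simp
  rw [hH0] at hHle
  by_contra hcon
  push_neg at hcon
  exact absurd (div_pos hcon (Ufun_pos t0)) (not_lt.2 hHle)
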